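/- Let m > 0 and let μ be a Borel measure on ℝ³ with compact support satisfying the two-dimensional growth condition: there exists C > 0 such that μ(B(x,r)) ≤ C r² for every x ∈ ℝ³ and r > 0. Then there exists C' > 0 such that for every g ∈ L²(μ; ℂ⁴): for Lebesgue-almost every x ∈ ℝ³ the integral Φg(x) := ∫ φ(x−y) g(y) dμ(y) converges absolutely, Φg belongs to L²(ℝ³; ℂ⁴) with respect to Lebesgue measure, and ∫_{ℝ³} |Φg(x)|² dx ≤ C' ∫ |g|² dμ. -/

import Mathlib

open Matrix

/-- The Pauli matrices `σ₁, σ₂, σ₃`. -/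
noncomputable def pauli : Fin 3 → Matrix (Fin 2) (Fin 2) ℂ
  | 0 => !![0, 1; 1, 0]
  | 1 => !![0, -Complex.I; Complex.I, 0]
  | 2 => !![1, 0; 0, -1]

/-- The Dirac matrices `α₁, α₂, α₃`, given in 2×2 blocks by `α_j = [[0, σ_j], [σ_j, 0]]`. -/
noncomputable def diracAlpha : Fin 3 → Matrix (Fin 4) (Fin 4) ℂ
  | 0 => !![0, 0, 0, 1;
            0, 0, 1, 0;
            0, 1, 0, 0;
            1, 0, 0, 0]
  | 1 => !![0, 0, 0, -Complex.I;
            0, 0, Complex.I, 0;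
            0, -Complex.I, 0, 0;
            Complex.I, 0, 0, 0]
  | 2 => !![0, 0, 1, 0;
            0, 0, 0, -1;
            1, 0, 0, 0;
            0, -1, 0, 0]

/-- The Dirac matrix `β = [[I₂, 0], [0, -I₂]]`. -/
noncomputable def diracBeta : Matrix (Fin 4) (Fin 4) ℂ :=
  !![1, 0, 0, 0;
     0, 1, 0, 0;
     0, 0, -1, 0;
     0, 0, 0, -1]

/-- For `p ∈ ℝ³`, the matrix `α·p = Σ_j p_j α_j`. -/
noncomputable def alphaDot (p : EuclideanSpace ℝ (Fin 3)) : Matrix (Fin 4) (Fin 4) ℂ :=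
  ∑ j : Fin 3, (p j : ℂ) • diracAlpha j


/-- The fundamental solution `φ` of the free Dirac operator `D = -i α·∇ + m β`:
`φ(x) = (e^{-m|x|}/(4π|x|)) (m β + (1 + m|x|) i (α·x)/|x|²)` for `x ≠ 0`. -/
noncomputable def phiFund (m : ℝ) (x : EuclideanSpace ℝ (Fin 3)) : Matrix (Fin 4) (Fin 4) ℂ :=
  ((Real.exp (-(m * ‖x‖)) / (4 * Real.pi * ‖x‖) : ℝ) : ℂ) •
    ((m : ℂ) • diracBeta +
      (((1 + m * ‖x‖) / ‖x‖ ^ 2 : ℝ) : ℂ) • (Complex.I • alphaDot x))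


open MeasureTheory

/-- The single-layer potential `Φg(x) = ∫ φ(x - y) g(y) dμ(y)`. -/
noncomputable def singleLayer (m : ℝ) (μ : Measure (EuclideanSpace ℝ (Fin 3)))
    (g : EuclideanSpace ℝ (Fin 3) → Fin 4 → ℂ) (x : EuclideanSpace ℝ (Fin 3)) : Fin 4 → ℂ :=
  ∫ y, (phiFund m (x - y)).mulVec (g y) ∂μ

open Metric ENNReal
section SLaux

lemma ofReal_norm_eq_coe_nnnorm {E : Type*} [NormedAddCommGroup E] (x : E) :
    ENNReal.ofReal ‖x‖ = (‖x‖₊ : ℝ≥0∞) :=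
  (ofReal_norm x).trans (enorm_eq_nnnorm x)

lemma abs_diracAlpha_le (k : Fin 3) (i j : Fin 4) : ‖diracAlpha k i j‖ ≤ 1 := by
  fin_cases k <;> fin_cases i <;> fin_cases j <;>
    simp [diracAlpha, Matrix.vecHead, Matrix.vecTail] <;> norm_num

lemma abs_diracBeta_le (i j : Fin 4) : ‖diracBeta i j‖ ≤ 1 := by
  fin_cases i <;> fin_cases j <;> simp [diracBeta, Matrix.vecHead, Matrix.vecTail] <;> norm_num

lemma coord_abs_le (u : EuclideanSpace ℝ (Fin 3)) (k : Fin 3) : |u k| ≤ ‖u‖ := by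
  rw [EuclideanSpace.norm_eq, ← Real.sqrt_sq_eq_abs]
  apply Real.sqrt_le_sqrt
  have : (u k)^2 = ‖u k‖^2 := by simp [Real.norm_eq_abs, sq_abs]
  rw [this]
  exact Finset.single_le_sum (f := fun i => ‖u i‖^2) (fun i _ => sq_nonneg _) (Finset.mem_univ k)

lemma abs_alphaDot_le (u : EuclideanSpace ℝ (Fin 3)) (i j : Fin 4) :
    ‖alphaDot u i j‖ ≤ 3 * ‖u‖ := by
  have h : alphaDot u i j = ∑ k : Fin 3, (u k : ℂ) * diracAlpha k i j := by
    simp [alphaDot, Matrix.sum_apply]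
  rw [h]
  calc ‖∑ k : Fin 3, (u k : ℂ) * diracAlpha k i j‖
      ≤ ∑ k : Fin 3, ‖(u k : ℂ) * diracAlpha k i j‖ :=
        norm_sum_le _ _
    _ ≤ ∑ _k : Fin 3, ‖u‖ := by
        apply Finset.sum_le_sum
        intro k _
        rw [norm_mul]
        calc ‖(u k : ℂ)‖ * ‖diracAlpha k i j‖
            ≤ |u k| * 1 := by
              rw [Complex.norm_real, Real.norm_eq_abs]
              exact mul_le_mul_of_nonneg_left (abs_diracAlpha_le k i j) (abs_nonneg _)
          _ ≤ ‖u‖ := by rw [mul_one]; exact coord_abs_le u k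
    _ = 3 * ‖u‖ := by simp [Finset.sum_const]

lemma abs_phi_entry_le {m : ℝ} (hm : 0 < m) {u : EuclideanSpace ℝ (Fin 3)} (hu : u ≠ 0)
    (i j : Fin 4) : ‖phiFund m u i j‖ ≤ 4 / ‖u‖^2 := by
  have hr : (0:ℝ) < ‖u‖ := norm_pos_iff.mpr hu
  set r := ‖u‖ with hrdef
  have hentry : phiFund m u i j =
      ((Real.exp (-(m * r)) / (4 * Real.pi * r) : ℝ) : ℂ) *
        ((m : ℂ) * diracBeta i j +
          (((1 + m * r) / r ^ 2 : ℝ) : ℂ) * (Complex.I * alphaDot u i j)) := by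
    simp [phiFund, Matrix.smul_apply, Matrix.add_apply, smul_eq_mul, hrdef]
  rw [hentry, norm_mul]
  have hpi : (1:ℝ) ≤ 4 * Real.pi := by nlinarith [Real.pi_gt_three]
  have hexp : Real.exp (-(m * r)) = (Real.exp (m*r))⁻¹ := by
    rw [← Real.exp_neg]
  have hmr : 0 < m * r := mul_pos hm hr
  have hexp_pos : 0 < Real.exp (m*r) := Real.exp_pos _
  have h1e : 1 + m * r ≤ Real.exp (m*r) := by
    have := Real.add_one_le_exp (m*r); linarith
  -- bound scalar
  have hscal : ‖((Real.exp (-(m * r)) / (4 * Real.pi * r) : ℝ) : ℂ)‖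
      ≤ (Real.exp (m*r))⁻¹ / r := by
    rw [Complex.norm_real, Real.norm_eq_abs, abs_div, abs_of_pos (Real.exp_pos _), abs_of_pos (by positivity)]
    rw [hexp]
    apply div_le_div_of_nonneg_left (by positivity) hr
    nlinarith
  have hB : ‖(m : ℂ) * diracBeta i j +
          (((1 + m * r) / r ^ 2 : ℝ) : ℂ) * (Complex.I * alphaDot u i j)‖
      ≤ m + (1 + m*r)/r^2 * (3*r) := by
    refine le_trans (norm_add_le _ _) (add_le_add ?_ ?_)
    · rw [norm_mul, Complex.norm_real, Real.norm_eq_abs, abs_of_pos hm]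
      calc m * ‖diracBeta i j‖ ≤ m * 1 :=
        mul_le_mul_of_nonneg_left (abs_diracBeta_le i j) hm.le
      _ = m := mul_one m
    · rw [norm_mul, norm_mul, Complex.norm_I, one_mul,
        Complex.norm_real, Real.norm_eq_abs, abs_of_pos (by positivity)]
      exact mul_le_mul_of_nonneg_left (abs_alphaDot_le u i j) (by positivity)
  have key : m + (1 + m*r)/r^2 * (3*r) ≤ 4 * Real.exp (m*r) / r := by
    have h3 : (1 + m*r)/r^2 * (3*r) = 3*(1+m*r)/r := by field_simp
    rw [h3, le_div_iff₀ hr]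
    have expand : (m + 3*(1+m*r)/r)*r = m*r + 3*(1+m*r) := by field_simp
    rw [expand]
    nlinarith
  calc ‖_‖ * ‖_‖
      ≤ ((Real.exp (m*r))⁻¹ / r) * (m + (1 + m*r)/r^2 * (3*r)) := by
        apply mul_le_mul hscal hB (norm_nonneg _) (by positivity)
    _ ≤ ((Real.exp (m*r))⁻¹ / r) * (4 * Real.exp (m*r) / r) :=
        mul_le_mul_of_nonneg_left key (by positivity)
    _ = 4 / r^2 := by
        rw [div_mul_div_comm, inv_mul_eq_div, mul_div_assoc, div_self hexp_pos.ne', mul_one, sq]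

lemma phiFund_zero (m : ℝ) : phiFund m (0 : EuclideanSpace ℝ (Fin 3)) = 0 := by
  have : ‖(0 : EuclideanSpace ℝ (Fin 3))‖ = 0 := norm_zero
  simp [phiFund, this]

lemma mulVec_norm_le {m : ℝ} (hm : 0 < m) (u : EuclideanSpace ℝ (Fin 3)) (v : Fin 4 → ℂ) :
    ‖(phiFund m u).mulVec v‖ ≤ 16 / ‖u‖^2 * ‖v‖ := by
  rcases eq_or_ne u 0 with rfl | hu
  · rw [phiFund_zero, Matrix.zero_mulVec, norm_zero]; positivity
  · have hr : 0 < ‖u‖ := norm_pos_iff.mpr hu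
    rw [pi_norm_le_iff_of_nonneg (by positivity)]
    intro i
    have hrepr : (phiFund m u).mulVec v i = ∑ j, phiFund m u i j * v j := by
      simp [Matrix.mulVec, dotProduct]
    rw [hrepr]
    calc ‖∑ j, phiFund m u i j * v j‖ ≤ ∑ j, ‖phiFund m u i j * v j‖ :=
          norm_sum_le _ _
      _ ≤ ∑ _j : Fin 4, (4/‖u‖^2) * ‖v‖ := by
          apply Finset.sum_le_sum
          intro j _
          rw [norm_mul]
          apply mul_le_mul ?_ (norm_le_pi_norm v j) (norm_nonneg _) (by positivity)
          exact abs_phi_entry_le hm hu i j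
      _ = 16/‖u‖^2 * ‖v‖ := by
          rw [Finset.sum_const]
          simp
          ring
noncomputable def kk (u : EuclideanSpace ℝ (Fin 3)) : ℝ≥0∞ := (ENNReal.ofReal ‖u‖ ^ 2)⁻¹

lemma measurable_kk : Measurable kk := by
  apply Measurable.inv
  exact (measurable_norm.ennreal_ofReal).pow_const 2

lemma mulVec_enorm_le {m : ℝ} (hm : 0 < m) (u : EuclideanSpace ℝ (Fin 3)) (v : Fin 4 → ℂ) :
    (‖(phiFund m u).mulVec v‖₊ : ℝ≥0∞) ≤ 16 * kk u * ‖v‖₊ := by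
  rcases eq_or_ne u 0 with rfl | hu
  · rw [phiFund_zero, Matrix.zero_mulVec]; simp
  · have hr : 0 < ‖u‖ := norm_pos_iff.mpr hu
    calc (‖(phiFund m u).mulVec v‖₊ : ℝ≥0∞) = ENNReal.ofReal ‖(phiFund m u).mulVec v‖ :=
          (ofReal_norm_eq_coe_nnnorm _).symm
      _ ≤ ENNReal.ofReal (16/‖u‖^2 * ‖v‖) := ENNReal.ofReal_le_ofReal (mulVec_norm_le hm u v)
      _ = ENNReal.ofReal (16/‖u‖^2) * ENNReal.ofReal ‖v‖ := ENNReal.ofReal_mul (by positivity)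
      _ = 16 * kk u * ‖v‖₊ := by
          rw [ofReal_norm_eq_coe_nnnorm]
          congr 1
          rw [kk, div_eq_mul_inv, ENNReal.ofReal_mul (by norm_num),
            ENNReal.ofReal_inv_of_pos (by positivity), ENNReal.ofReal_pow (norm_nonneg _)]
          norm_num

noncomputable def V3 : ℝ≥0∞ := volume (Metric.ball (0:EuclideanSpace ℝ (Fin 3)) 1)

lemma V3_lt_top : V3 < ⊤ := measure_ball_lt_top

lemma vol_cb (y : EuclideanSpace ℝ (Fin 3)) {r : ℝ} (hr : 0 ≤ r) :
    volume (closedBall y r) = ENNReal.ofReal (r^3) * V3 := by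
  rw [Measure.addHaar_closedBall volume y hr]
  norm_num [V3]

lemma exists_dyadic {a : ℝ} (ha : 1 ≤ a) : ∃ n : ℕ, 2^n ≤ a ∧ a < 2^(n+1) := by
  have hex : ∃ n : ℕ, a < 2^(n+1) := by
    obtain ⟨n, hn⟩ := pow_unbounded_of_one_lt a (one_lt_two (α := ℝ))
    exact ⟨n, lt_of_lt_of_le hn (by gcongr <;> norm_num)⟩
  classical
  let n₀ := Nat.find hex
  refine ⟨n₀, ?_, Nat.find_spec hex⟩
  rcases Nat.eq_zero_or_pos n₀ with h0 | hpos
  · rw [h0]; simpa using ha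
  · obtain ⟨k, hk⟩ := Nat.exists_eq_succ_of_ne_zero hpos.ne'
    have := Nat.find_min hex (m := k) (by omega)
    push_neg at this
    calc (2:ℝ)^n₀ = 2^(k+1) := by rw [hk]
      _ ≤ a := this
lemma inv_ofReal_mul {a b : ℝ} (ha : 0 < a) (hb : 0 ≤ b) :
    (ENNReal.ofReal a)⁻¹ * ENNReal.ofReal b = ENNReal.ofReal (b / a) := by
  rw [← ENNReal.ofReal_inv_of_pos ha, ← ENNReal.ofReal_mul (by positivity), inv_mul_eq_div]

lemma tsum_half_pow : ∑' n : ℕ, (ENNReal.ofReal ((1/2)^n)) = 2 := by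
  have : ∀ n : ℕ, ENNReal.ofReal ((1/2:ℝ)^n) = (2⁻¹ : ℝ≥0∞)^n := by
    intro n
    rw [ENNReal.ofReal_pow (by norm_num)]
    congr 1
    rw [one_div, ENNReal.ofReal_inv_of_pos (by norm_num)]
    norm_num
  simp_rw [this]
  rw [ENNReal.tsum_geometric]
  rw [ENNReal.one_sub_inv_two]
  simp

lemma lintegral_kk_ball (y : EuclideanSpace ℝ (Fin 3)) {t : ℝ} (ht : 0 < t) :
    ∫⁻ x in closedBall y t, kk (x - y) ∂volume ≤ 8 * V3 * ENNReal.ofReal t := by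
  set A : ℕ → Set (EuclideanSpace ℝ (Fin 3)) :=
    fun n => closedBall y (t/2^n) \ ball y (t/2^(n+1)) with hA
  have hcover : closedBall y t ⊆ {y} ∪ ⋃ n, A n := by
    intro x hx
    rcases eq_or_ne x y with rfl | hxy
    · exact Or.inl rfl
    · right
      have hd : 0 < dist x y := dist_pos.mpr hxy
      have hdt : dist x y ≤ t := mem_closedBall.mp hx
      obtain ⟨n, h1, h2⟩ := exists_dyadic (a := t / dist x y)
        ((one_le_div hd).mpr hdt)
      rw [le_div_iff₀ hd] at h1
      rw [div_lt_iff₀ hd] at h2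
      refine Set.mem_iUnion.mpr ⟨n, ?_, ?_⟩
      · refine mem_closedBall.mpr ?_
        rw [le_div_iff₀ (by positivity : (0:ℝ) < 2^n)]
        nlinarith
      · intro hmem
        rw [mem_ball, lt_div_iff₀ (by positivity : (0:ℝ) < 2^(n+1))] at hmem
        nlinarith
  calc ∫⁻ x in closedBall y t, kk (x - y) ∂volume
      ≤ ∫⁻ x in {y} ∪ ⋃ n, A n, kk (x - y) ∂volume := lintegral_mono_set hcover
    _ ≤ (∫⁻ x in ({y} : Set (EuclideanSpace ℝ (Fin 3))), kk (x - y) ∂volume)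
        + ∫⁻ x in ⋃ n, A n, kk (x - y) ∂volume := lintegral_union_le _ _ _
    _ ≤ 0 + ∑' n, ∫⁻ x in A n, kk (x - y) ∂volume := by
        gcongr
        · rw [setLIntegral_measure_zero]
          exact measure_singleton y
        · exact lintegral_iUnion_le _ _
    _ ≤ 0 + ∑' n : ℕ, ENNReal.ofReal (4 * t * (1/2)^n) * V3 := by
        gcongr with n
        have hbound : ∀ x ∈ A n, kk (x - y) ≤ (ENNReal.ofReal ((t/2^(n+1))^2))⁻¹ := by
          intro x hx
          have hd : t/2^(n+1) ≤ dist x y := by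
            by_contra hcon
            exact hx.2 (mem_ball.mpr (by linarith))
          rw [kk, ← ENNReal.ofReal_pow (norm_nonneg _)]
          apply ENNReal.inv_le_inv.mpr
          apply ENNReal.ofReal_le_ofReal
          have h0 : (0:ℝ) < t/2^(n+1) := by positivity
          rw [dist_eq_norm] at hd
          nlinarith [mul_le_mul hd hd h0.le (norm_nonneg (x - y))]
        calc ∫⁻ x in A n, kk (x - y) ∂volume
            ≤ ∫⁻ _x in A n, (ENNReal.ofReal ((t/2^(n+1))^2))⁻¹ ∂volume :=
              setLIntegral_mono measurable_const hbound
          _ = (ENNReal.ofReal ((t/2^(n+1))^2))⁻¹ * volume (A n) := setLIntegral_const _ _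
          _ ≤ (ENNReal.ofReal ((t/2^(n+1))^2))⁻¹ * (ENNReal.ofReal ((t/2^n)^3) * V3) := by
              gcongr
              rw [← vol_cb y (by positivity)]
              exact measure_mono Set.diff_subset
          _ = ENNReal.ofReal ((t/2^n)^3 / (t/2^(n+1))^2) * V3 := by
              rw [← mul_assoc, inv_ofReal_mul (by positivity) (by positivity)]
          _ = ENNReal.ofReal (4 * t * (1/2)^n) * V3 := by
              congr 1
              congr 1
              rw [_root_.one_div_pow]
              field_simp
              ring
    _ = 8 * V3 * ENNReal.ofReal t := by
        rw [zero_add]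
        have : ∀ n : ℕ, ENNReal.ofReal (4 * t * (1/2)^n) * V3
            = (ENNReal.ofReal (4*t) * V3) * ENNReal.ofReal ((1/2)^n) := by
          intro n
          rw [ENNReal.ofReal_mul (by positivity)]
          ring
        simp_rw [this]
        rw [ENNReal.tsum_mul_left, tsum_half_pow]
        rw [ENNReal.ofReal_mul (by norm_num)]
        have h4 : ENNReal.ofReal (4:ℝ) = 4 := by norm_num
        rw [h4]
        ring

lemma lintegral_kk_sq_compl (y : EuclideanSpace ℝ (Fin 3)) {s : ℝ} (hs : 0 < s) :
    ∫⁻ x in (closedBall y s)ᶜ, (kk (x - y))^2 ∂volume ≤ 16 * V3 * ENNReal.ofReal (1/s) := by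
  set D : ℕ → Set (EuclideanSpace ℝ (Fin 3)) :=
    fun n => closedBall y (s*2^(n+1)) \ ball y (s*2^n) with hD
  have hcover : (closedBall y s)ᶜ ⊆ ⋃ n, D n := by
    intro x hx
    have hd : s < dist x y := by
      by_contra hcon
      exact hx (mem_closedBall.mpr (by linarith))
    have hd0 : 0 < dist x y := lt_trans hs hd
    obtain ⟨n, h1, h2⟩ := exists_dyadic (a := dist x y / s)
      ((one_le_div hs).mpr hd.le)
    rw [le_div_iff₀ hs] at h1
    rw [div_lt_iff₀ hs] at h2
    refine Set.mem_iUnion.mpr ⟨n, ?_, ?_⟩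
    · exact mem_closedBall.mpr (by nlinarith)
    · intro hmem
      rw [mem_ball] at hmem
      nlinarith
  calc ∫⁻ x in (closedBall y s)ᶜ, (kk (x - y))^2 ∂volume
      ≤ ∫⁻ x in ⋃ n, D n, (kk (x - y))^2 ∂volume := lintegral_mono_set hcover
    _ ≤ ∑' n, ∫⁻ x in D n, (kk (x - y))^2 ∂volume := lintegral_iUnion_le _ _
    _ ≤ ∑' n : ℕ, ENNReal.ofReal (8/s * (1/2)^n) * V3 := by
        gcongr with n
        have hbound : ∀ x ∈ D n, (kk (x - y))^2 ≤ (ENNReal.ofReal (((s*2^n)^2)^2))⁻¹ := by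
          intro x hx
          have hd : s*2^n ≤ dist x y := by
            by_contra hcon
            exact hx.2 (mem_ball.mpr (by linarith))
          have h0 : (0:ℝ) < s*2^n := by positivity
          rw [dist_eq_norm] at hd
          have hk : kk (x - y) ≤ (ENNReal.ofReal ((s*2^n)^2))⁻¹ := by
            rw [kk, ← ENNReal.ofReal_pow (norm_nonneg _)]
            apply ENNReal.inv_le_inv.mpr
            apply ENNReal.ofReal_le_ofReal
            nlinarith [mul_le_mul hd hd h0.le (norm_nonneg (x - y))]
          calc (kk (x - y))^2 ≤ ((ENNReal.ofReal ((s*2^n)^2))⁻¹)^2 := by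
                exact pow_le_pow_left' hk 2
            _ = (ENNReal.ofReal (((s*2^n)^2)^2))⁻¹ := by
                have hor : ENNReal.ofReal (((s*2^n)^2)^2) = ((ENNReal.ofReal (s*2^n))^2)^2 := by
                  rw [ENNReal.ofReal_pow (sq_nonneg _), ENNReal.ofReal_pow h0.le]
                rw [hor, ← ENNReal.inv_pow, ENNReal.ofReal_pow h0.le]
        calc ∫⁻ x in D n, (kk (x - y))^2 ∂volume
            ≤ ∫⁻ _x in D n, (ENNReal.ofReal (((s*2^n)^2)^2))⁻¹ ∂volume :=
              setLIntegral_mono measurable_const hbound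
          _ = (ENNReal.ofReal (((s*2^n)^2)^2))⁻¹ * volume (D n) := setLIntegral_const _ _
          _ ≤ (ENNReal.ofReal (((s*2^n)^2)^2))⁻¹ * (ENNReal.ofReal ((s*2^(n+1))^3) * V3) := by
              gcongr
              rw [← vol_cb y (by positivity)]
              exact measure_mono Set.diff_subset
          _ = ENNReal.ofReal ((s*2^(n+1))^3 / ((s*2^n)^2)^2) * V3 := by
              rw [← mul_assoc, inv_ofReal_mul (by positivity) (by positivity)]
          _ = ENNReal.ofReal (8/s * (1/2)^n) * V3 := by
              congr 2
              rw [_root_.one_div_pow]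
              field_simp
              ring
    _ = 16 * V3 * ENNReal.ofReal (1/s) := by
        have : ∀ n : ℕ, ENNReal.ofReal (8/s * (1/2)^n) * V3
            = (ENNReal.ofReal (8/s) * V3) * ENNReal.ofReal ((1/2)^n) := by
          intro n
          rw [ENNReal.ofReal_mul (by positivity)]
          ring
        simp_rw [this]
        rw [ENNReal.tsum_mul_left, tsum_half_pow]
        have h8 : (8:ℝ)/s = 8 * (1/s) := by ring
        rw [h8, ENNReal.ofReal_mul (by norm_num)]
        have : ENNReal.ofReal (8:ℝ) = 8 := by norm_num
        rw [this]
        ring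

lemma kk_le_of_norm_ge {u : EuclideanSpace ℝ (Fin 3)} {a : ℝ} (ha : 0 < a) (h : a ≤ ‖u‖) :
    kk u ≤ (ENNReal.ofReal (a^2))⁻¹ := by
  rw [kk, ← ENNReal.ofReal_pow (norm_nonneg _)]
  apply ENNReal.inv_le_inv.mpr
  apply ENNReal.ofReal_le_ofReal
  nlinarith [mul_le_mul h h ha.le (norm_nonneg u)]

lemma lintegral_kk_mul_kk {y z : EuclideanSpace ℝ (Fin 3)} (hyz : y ≠ z) :
    ∫⁻ x, kk (x - y) * kk (x - z) ∂volume ≤ 224 * V3 * ENNReal.ofReal (1 / ‖y - z‖) := by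
  set d := ‖y - z‖ with hd
  have hd0 : 0 < d := by rw [hd]; exact norm_pos_iff.mpr (sub_ne_zero.mpr hyz)
  set S1 := closedBall y (d/2) with hS1
  set S2 := closedBall z (d/2) with hS2
  set S4 := (closedBall y (2*d))ᶜ with hS4
  set S3 := closedBall y (2*d) \ (S1 ∪ S2) with hS3
  have hmky : Measurable fun x : EuclideanSpace ℝ (Fin 3) => kk (x - y) :=
    measurable_kk.comp (measurable_id.sub measurable_const)
  have hmkz : Measurable fun x : EuclideanSpace ℝ (Fin 3) => kk (x - z) :=
    measurable_kk.comp (measurable_id.sub measurable_const)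
  have hcover : (Set.univ : Set (EuclideanSpace ℝ (Fin 3))) ⊆ (S1 ∪ S2) ∪ (S3 ∪ S4) := by
    intro x _
    by_cases h1 : x ∈ S1 ∪ S2
    · exact Or.inl h1
    · by_cases h4 : x ∈ S4
      · exact Or.inr (Or.inr h4)
      · refine Or.inr (Or.inl ⟨?_, h1⟩)
        rw [hS4, Set.notMem_compl_iff] at h4
        exact h4
  -- S1 bound
  have hb1 : ∫⁻ x in S1, kk (x - y) * kk (x - z) ∂volume ≤ 16 * V3 * ENNReal.ofReal (1/d) := by
    have hstep : ∀ x ∈ S1, kk (x - y) * kk (x - z)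
        ≤ kk (x - y) * (ENNReal.ofReal ((d/2)^2))⁻¹ := by
      intro x hx
      gcongr
      apply kk_le_of_norm_ge (by positivity)
      have hxy : ‖x - y‖ ≤ d/2 := by
        have := mem_closedBall.mp hx; rwa [dist_eq_norm] at this
      have : d ≤ ‖x - y‖ + ‖x - z‖ := by
        calc d = ‖y - z‖ := hd
          _ = ‖(y - x) + (x - z)‖ := by abel_nf
          _ ≤ ‖y - x‖ + ‖x - z‖ := norm_add_le _ _
          _ = ‖x - y‖ + ‖x - z‖ := by rw [norm_sub_rev]
      linarith
    calc ∫⁻ x in S1, kk (x - y) * kk (x - z) ∂volume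
        ≤ ∫⁻ x in S1, kk (x - y) * (ENNReal.ofReal ((d/2)^2))⁻¹ ∂volume :=
          setLIntegral_mono (hmky.mul_const _) hstep
      _ = (∫⁻ x in S1, kk (x - y) ∂volume) * (ENNReal.ofReal ((d/2)^2))⁻¹ :=
          lintegral_mul_const _ hmky
      _ ≤ (8 * V3 * ENNReal.ofReal (d/2)) * (ENNReal.ofReal ((d/2)^2))⁻¹ := by
          gcongr
          exact lintegral_kk_ball y (by positivity)
      _ = 16 * V3 * ENNReal.ofReal (1/d) := by
          rw [mul_assoc (8*V3), mul_comm (ENNReal.ofReal (d/2)),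
            inv_ofReal_mul (by positivity) (by positivity)]
          have : (d/2) / (d/2)^2 = 2 * (1/d) := by field_simp
          rw [this, ENNReal.ofReal_mul (by norm_num)]
          have h2 : ENNReal.ofReal (2:ℝ) = 2 := by norm_num
          rw [h2]; ring
  -- S2 bound
  have hb2 : ∫⁻ x in S2, kk (x - y) * kk (x - z) ∂volume ≤ 16 * V3 * ENNReal.ofReal (1/d) := by
    have hstep : ∀ x ∈ S2, kk (x - y) * kk (x - z)
        ≤ (ENNReal.ofReal ((d/2)^2))⁻¹ * kk (x - z) := by
      intro x hx
      gcongr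
      apply kk_le_of_norm_ge (by positivity)
      have hxz : ‖x - z‖ ≤ d/2 := by
        have := mem_closedBall.mp hx; rwa [dist_eq_norm] at this
      have : d ≤ ‖x - y‖ + ‖x - z‖ := by
        calc d = ‖y - z‖ := hd
          _ = ‖(y - x) + (x - z)‖ := by abel_nf
          _ ≤ ‖y - x‖ + ‖x - z‖ := norm_add_le _ _
          _ = ‖x - y‖ + ‖x - z‖ := by rw [norm_sub_rev]
      linarith
    calc ∫⁻ x in S2, kk (x - y) * kk (x - z) ∂volume
        ≤ ∫⁻ x in S2, (ENNReal.ofReal ((d/2)^2))⁻¹ * kk (x - z) ∂volume :=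
          setLIntegral_mono (hmkz.const_mul _) hstep
      _ = (ENNReal.ofReal ((d/2)^2))⁻¹ * ∫⁻ x in S2, kk (x - z) ∂volume :=
          lintegral_const_mul _ hmkz
      _ ≤ (ENNReal.ofReal ((d/2)^2))⁻¹ * (8 * V3 * ENNReal.ofReal (d/2)) := by
          gcongr
          exact lintegral_kk_ball z (by positivity)
      _ = 16 * V3 * ENNReal.ofReal (1/d) := by
          rw [mul_comm, mul_assoc (8*V3), mul_comm (ENNReal.ofReal (d/2)),
            inv_ofReal_mul (by positivity) (by positivity)]
          have : (d/2) / (d/2)^2 = 2 * (1/d) := by field_simp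
          rw [this, ENNReal.ofReal_mul (by norm_num)]
          have h2 : ENNReal.ofReal (2:ℝ) = 2 := by norm_num
          rw [h2]; ring
  -- S3 bound
  have hb3 : ∫⁻ x in S3, kk (x - y) * kk (x - z) ∂volume ≤ 128 * V3 * ENNReal.ofReal (1/d) := by
    have hstep : ∀ x ∈ S3, kk (x - y) * kk (x - z)
        ≤ (ENNReal.ofReal (((d/2)^2)^2))⁻¹ := by
      intro x hx
      obtain ⟨hx1, hx2⟩ := hx
      rw [Set.mem_union] at hx2
      push_neg at hx2
      have hy' : d/2 ≤ ‖x - y‖ := by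
        by_contra hcon
        exact hx2.1 (mem_closedBall.mpr (by rw [dist_eq_norm]; linarith))
      have hz' : d/2 ≤ ‖x - z‖ := by
        by_contra hcon
        exact hx2.2 (mem_closedBall.mpr (by rw [dist_eq_norm]; linarith))
      calc kk (x - y) * kk (x - z)
          ≤ (ENNReal.ofReal ((d/2)^2))⁻¹ * (ENNReal.ofReal ((d/2)^2))⁻¹ :=
            mul_le_mul' (kk_le_of_norm_ge (by positivity) hy')
              (kk_le_of_norm_ge (by positivity) hz')
        _ = (ENNReal.ofReal (((d/2)^2)^2))⁻¹ := by
            rw [← ENNReal.mul_inv (Or.inl (ENNReal.ofReal_pos.mpr (by positivity)).ne')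
              (Or.inl ENNReal.ofReal_ne_top),
              ← ENNReal.ofReal_mul (by positivity)]
            congr 2
            ring
    calc ∫⁻ x in S3, kk (x - y) * kk (x - z) ∂volume
        ≤ ∫⁻ _x in S3, (ENNReal.ofReal (((d/2)^2)^2))⁻¹ ∂volume :=
          setLIntegral_mono measurable_const hstep
      _ = (ENNReal.ofReal (((d/2)^2)^2))⁻¹ * volume S3 := setLIntegral_const _ _
      _ ≤ (ENNReal.ofReal (((d/2)^2)^2))⁻¹ * (ENNReal.ofReal ((2*d)^3) * V3) := by
          gcongr
          rw [← vol_cb y (by positivity)]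
          exact measure_mono Set.diff_subset
      _ = ENNReal.ofReal ((2*d)^3 / ((d/2)^2)^2) * V3 := by
          rw [← mul_assoc, inv_ofReal_mul (by positivity) (by positivity)]
      _ = 128 * V3 * ENNReal.ofReal (1/d) := by
          have : (2*d)^3 / ((d/2)^2)^2 = 128 * (1/d) := by field_simp; ring
          rw [this, ENNReal.ofReal_mul (by norm_num)]
          have h2 : ENNReal.ofReal (128:ℝ) = 128 := by norm_num
          rw [h2]; ring
  -- S4 bound
  have hb4 : ∫⁻ x in S4, kk (x - y) * kk (x - z) ∂volume ≤ 64 * V3 * ENNReal.ofReal (1/d) := by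
    have hstep : ∀ x ∈ S4, kk (x - y) * kk (x - z) ≤ 4 * (kk (x - y))^2 := by
      intro x hx
      have hxy : 2*d < ‖x - y‖ := by
        rw [hS4, Set.mem_compl_iff, mem_closedBall, not_le, dist_eq_norm] at hx
        exact hx
      have hxz : ‖x - y‖/2 ≤ ‖x - z‖ := by
        have htri := dist_triangle x z y
        rw [dist_eq_norm, dist_eq_norm, dist_eq_norm] at htri
        have hzy : ‖z - y‖ = d := by rw [hd, norm_sub_rev]
        linarith
      have hr0 : (0:ℝ) < ‖x - y‖ := by nlinarith
      have h1 : kk (x - z) ≤ (ENNReal.ofReal ((‖x - y‖/2)^2))⁻¹ :=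
        kk_le_of_norm_ge (by nlinarith : (0:ℝ) < ‖x - y‖/2) hxz
      have h2 : (ENNReal.ofReal ((‖x - y‖/2)^2))⁻¹ = 4 * kk (x - y) := by
        rw [kk, ← ENNReal.ofReal_pow (norm_nonneg _)]
        have heq : (‖x - y‖/2)^2 = ‖x - y‖^2 / 4 := by ring
        rw [heq, ENNReal.ofReal_div_of_pos (by norm_num : (0:ℝ) < 4)]
        rw [ENNReal.inv_div (Or.inl (by norm_num)) (Or.inl (by norm_num))]
        have h4 : ENNReal.ofReal (4:ℝ) = 4 := by norm_num
        rw [h4, ENNReal.div_eq_inv_mul]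
        ring
      calc kk (x - y) * kk (x - z) ≤ kk (x - y) * (4 * kk (x - y)) := by
            rw [← h2] at *; exact mul_le_mul_right h1 _
        _ = 4 * (kk (x - y))^2 := by ring
    calc ∫⁻ x in S4, kk (x - y) * kk (x - z) ∂volume
        ≤ ∫⁻ x in S4, 4 * (kk (x - y))^2 ∂volume :=
          setLIntegral_mono (((hmky.pow_const 2).const_mul 4)) hstep
      _ = 4 * ∫⁻ x in S4, (kk (x - y))^2 ∂volume := lintegral_const_mul _ (hmky.pow_const 2)
      _ ≤ 4 * (16 * V3 * ENNReal.ofReal (1/(2*d))) :=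
          mul_le_mul_right (lintegral_kk_sq_compl y (by linarith : (0:ℝ) < 2*d)) 4
      _ ≤ 4 * (16 * V3 * ENNReal.ofReal (1/d)) := by
          have hle : ENNReal.ofReal (1/(2*d)) ≤ ENNReal.ofReal (1/d) := by
            apply ENNReal.ofReal_le_ofReal
            rw [div_le_div_iff₀ (by linarith) hd0]
            nlinarith
          exact mul_le_mul_right (mul_le_mul_right hle _) _
      _ = 64 * V3 * ENNReal.ofReal (1/d) := by ring
  calc ∫⁻ x, kk (x - y) * kk (x - z) ∂volume
      = ∫⁻ x in Set.univ, kk (x - y) * kk (x - z) ∂volume := (setLIntegral_univ _).symm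
    _ ≤ ∫⁻ x in (S1 ∪ S2) ∪ (S3 ∪ S4), kk (x - y) * kk (x - z) ∂volume :=
        lintegral_mono_set hcover
    _ ≤ (∫⁻ x in S1 ∪ S2, kk (x - y) * kk (x - z) ∂volume)
        + ∫⁻ x in S3 ∪ S4, kk (x - y) * kk (x - z) ∂volume := lintegral_union_le _ _ _
    _ ≤ ((∫⁻ x in S1, kk (x - y) * kk (x - z) ∂volume)
          + ∫⁻ x in S2, kk (x - y) * kk (x - z) ∂volume)
        + ((∫⁻ x in S3, kk (x - y) * kk (x - z) ∂volume)
          + ∫⁻ x in S4, kk (x - y) * kk (x - z) ∂volume) :=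
        add_le_add (lintegral_union_le _ _ _) (lintegral_union_le _ _ _)
    _ ≤ (16 * V3 * ENNReal.ofReal (1/d) + 16 * V3 * ENNReal.ofReal (1/d))
        + (128 * V3 * ENNReal.ofReal (1/d) + 64 * V3 * ENNReal.ofReal (1/d)) :=
        add_le_add (add_le_add hb1 hb2) (add_le_add hb3 hb4)
    _ = 224 * V3 * ENNReal.ofReal (1/d) := by ring

lemma mu_singleton_zero {μ : Measure (EuclideanSpace ℝ (Fin 3))} {C : ℝ} (hC : 0 < C)
    (hgrowth : ∀ (x : EuclideanSpace ℝ (Fin 3)) (r : ℝ), 0 < r →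
      μ (ball x r) ≤ ENNReal.ofReal (C * r ^ 2)) (y : EuclideanSpace ℝ (Fin 3)) :
    μ {y} = 0 := by
  by_contra h
  have hp : 0 < μ {y} := pos_iff_ne_zero.mpr h
  obtain ⟨r, h0r, hr⟩ := ENNReal.lt_iff_exists_real_btwn.mp hp
  obtain ⟨hr0, hrlt⟩ := hr
  have hrpos : 0 < r := ENNReal.ofReal_pos.mp (by simpa using hr0)
  set t := Real.sqrt (r / (2*C)) with htdef
  have ht : 0 < t := Real.sqrt_pos.mpr (by positivity)
  have hle : μ {y} ≤ ENNReal.ofReal (C * t^2) := by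
    refine le_trans (measure_mono ?_) (hgrowth y t ht)
    intro w hw
    simp only [Set.mem_singleton_iff] at hw
    subst hw
    exact mem_ball_self ht
  have ht2 : C * t^2 = r/2 := by
    rw [htdef, Real.sq_sqrt (by positivity)]
    field_simp
  rw [ht2] at hle
  have : ENNReal.ofReal (r/2) < ENNReal.ofReal r := by
    apply ENNReal.ofReal_lt_ofReal_iff_of_nonneg (by positivity) |>.mpr
    linarith
  exact absurd (lt_of_le_of_lt hle this) (not_lt.mpr hrlt.le)

lemma potential_bound {μ : Measure (EuclideanSpace ℝ (Fin 3))} {C Mtot : ℝ} (hC : 0 < C)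
    (hgrowth : ∀ (x : EuclideanSpace ℝ (Fin 3)) (r : ℝ), 0 < r →
      μ (ball x r) ≤ ENNReal.ofReal (C * r ^ 2))
    (htot : μ Set.univ ≤ ENNReal.ofReal Mtot) (y : EuclideanSpace ℝ (Fin 3)) :
    ∫⁻ z, (ENNReal.ofReal ‖y - z‖)⁻¹ ∂μ ≤ ENNReal.ofReal Mtot + ENNReal.ofReal (16*C) := by
  set A : ℕ → Set (EuclideanSpace ℝ (Fin 3)) :=
    fun n => closedBall y (1/2^n) \ ball y (1/2^(n+1)) with hA
  have hcover : (Set.univ : Set (EuclideanSpace ℝ (Fin 3)))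
      ⊆ ((closedBall y 1)ᶜ ∪ {y}) ∪ ⋃ n, A n := by
    intro z _
    by_cases hz : z ∈ closedBall y 1
    · rcases eq_or_ne z y with rfl | hzy
      · exact Or.inl (Or.inr rfl)
      · right
        have hd : 0 < dist z y := dist_pos.mpr hzy
        have hdt : dist z y ≤ 1 := mem_closedBall.mp hz
        obtain ⟨n, h1, h2⟩ := exists_dyadic (a := 1 / dist z y)
          ((one_le_div hd).mpr hdt)
        rw [le_div_iff₀ hd] at h1
        rw [div_lt_iff₀ hd] at h2
        refine Set.mem_iUnion.mpr ⟨n, ?_, ?_⟩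
        · refine mem_closedBall.mpr ?_
          rw [le_div_iff₀ (by positivity : (0:ℝ) < 2^n)]
          nlinarith
        · intro hmem
          rw [mem_ball, lt_div_iff₀ (by positivity : (0:ℝ) < 2^(n+1))] at hmem
          nlinarith
    · exact Or.inl (Or.inl hz)
  have hfar : ∫⁻ z in (closedBall y 1)ᶜ, (ENNReal.ofReal ‖y - z‖)⁻¹ ∂μ
      ≤ ENNReal.ofReal Mtot := by
    calc ∫⁻ z in (closedBall y 1)ᶜ, (ENNReal.ofReal ‖y - z‖)⁻¹ ∂μ
        ≤ ∫⁻ _z in (closedBall y 1)ᶜ, 1 ∂μ := by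
          apply setLIntegral_mono measurable_const
          intro z hz
          have h1 : (1:ℝ) < dist z y := by
            rw [Set.mem_compl_iff, mem_closedBall, not_le] at hz
            exact hz
          rw [dist_eq_norm, norm_sub_rev] at h1
          rw [ENNReal.inv_le_one]
          calc (1:ℝ≥0∞) = ENNReal.ofReal 1 := by norm_num
            _ ≤ ENNReal.ofReal ‖y - z‖ := ENNReal.ofReal_le_ofReal h1.le
      _ = μ ((closedBall y 1)ᶜ) := by rw [setLIntegral_const, one_mul]
      _ ≤ μ Set.univ := measure_mono (Set.subset_univ _)
      _ ≤ ENNReal.ofReal Mtot := htot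
  have hsing : ∫⁻ z in ({y} : Set (EuclideanSpace ℝ (Fin 3))),
      (ENNReal.ofReal ‖y - z‖)⁻¹ ∂μ = 0 :=
    setLIntegral_measure_zero _ _ (mu_singleton_zero hC hgrowth y)
  have hann : ∀ n : ℕ, ∫⁻ z in A n, (ENNReal.ofReal ‖y - z‖)⁻¹ ∂μ
      ≤ ENNReal.ofReal (8*C*(1/2)^n) := by
    intro n
    have hbound : ∀ z ∈ A n, (ENNReal.ofReal ‖y - z‖)⁻¹
        ≤ ENNReal.ofReal ((2:ℝ)^(n+1)) := by
      intro z hz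
      have hd : 1/2^(n+1) ≤ dist z y := by
        by_contra hcon
        exact hz.2 (mem_ball.mpr (by linarith))
      rw [dist_eq_norm, norm_sub_rev] at hd
      have h2 : (ENNReal.ofReal ‖y - z‖)⁻¹ ≤ (ENNReal.ofReal (1/2^(n+1)))⁻¹ :=
        ENNReal.inv_le_inv.mpr (ENNReal.ofReal_le_ofReal hd)
      refine h2.trans_eq ?_
      rw [one_div, ENNReal.ofReal_inv_of_pos (by positivity : (0:ℝ) < 2^(n+1)), inv_inv]
    calc ∫⁻ z in A n, (ENNReal.ofReal ‖y - z‖)⁻¹ ∂μ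
        ≤ ∫⁻ _z in A n, ENNReal.ofReal ((2:ℝ)^(n+1)) ∂μ :=
          setLIntegral_mono measurable_const hbound
      _ = ENNReal.ofReal ((2:ℝ)^(n+1)) * μ (A n) := setLIntegral_const _ _
      _ ≤ ENNReal.ofReal ((2:ℝ)^(n+1)) * ENNReal.ofReal (C * (2/2^n)^2) := by
          gcongr
          refine le_trans (measure_mono ?_) (hgrowth y (2/2^n) (by positivity))
          intro z hz
          have hz1 := mem_closedBall.mp hz.1
          refine mem_ball.mpr (lt_of_le_of_lt hz1 ?_)
          rw [div_lt_div_iff_of_pos_right (by positivity : (0:ℝ) < 2^n)] -- 1/2^n < 2/2^n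
          norm_num
      _ ≤ ENNReal.ofReal (8*C*(1/2)^n) := by
          rw [← ENNReal.ofReal_mul (by positivity)]
          apply ENNReal.ofReal_le_ofReal
          have heq : (2:ℝ)^(n+1) * (C * (2/2^n)^2) = 8*C*(1/2)^n := by
            rw [_root_.one_div_pow]
            field_simp
            ring
          rw [heq]
  calc ∫⁻ z, (ENNReal.ofReal ‖y - z‖)⁻¹ ∂μ
      = ∫⁻ z in Set.univ, (ENNReal.ofReal ‖y - z‖)⁻¹ ∂μ := (setLIntegral_univ _).symm
    _ ≤ ∫⁻ z in ((closedBall y 1)ᶜ ∪ {y}) ∪ ⋃ n, A n, (ENNReal.ofReal ‖y - z‖)⁻¹ ∂μ :=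
        lintegral_mono_set hcover
    _ ≤ ((∫⁻ z in (closedBall y 1)ᶜ, (ENNReal.ofReal ‖y - z‖)⁻¹ ∂μ)
          + ∫⁻ z in ({y} : Set (EuclideanSpace ℝ (Fin 3))), (ENNReal.ofReal ‖y - z‖)⁻¹ ∂μ)
        + ∑' n, ∫⁻ z in A n, (ENNReal.ofReal ‖y - z‖)⁻¹ ∂μ :=
        le_trans (lintegral_union_le _ _ _)
          (add_le_add (lintegral_union_le _ _ _) (lintegral_iUnion_le _ _))
    _ ≤ (ENNReal.ofReal Mtot + 0) + ∑' n : ℕ, ENNReal.ofReal (8*C*(1/2)^n) :=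
        add_le_add (add_le_add hfar (le_of_eq hsing)) (ENNReal.tsum_le_tsum hann)
    _ ≤ ENNReal.ofReal Mtot + ENNReal.ofReal (16*C) := by
        rw [add_zero]
        gcongr
        have hofr : ∀ n : ℕ, ENNReal.ofReal (8*C*(1/2)^n)
            = ENNReal.ofReal (8*C) * ENNReal.ofReal ((1/2)^n) := by
          intro n
          rw [ENNReal.ofReal_mul (by positivity)]
        simp_rw [hofr]
        rw [ENNReal.tsum_mul_left, tsum_half_pow]
        calc ENNReal.ofReal (8*C) * 2 = ENNReal.ofReal (8*C) * ENNReal.ofReal 2 := by norm_num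
          _ = ENNReal.ofReal (16*C) := by
              rw [← ENNReal.ofReal_mul (by positivity)]
              congr 1
              ring
          _ ≤ ENNReal.ofReal (16*C) := le_rfl

lemma mul_le_sq_add_sq (a b : ℝ≥0∞) : a * b ≤ a^2 + b^2 := by
  rcases le_total a b with h | h
  · calc a*b ≤ b*b := mul_le_mul_left h b
      _ = b^2 := (sq b).symm
      _ ≤ a^2 + b^2 := le_add_self
  · calc a*b ≤ a*a := mul_le_mul_right h a
      _ = a^2 := (sq a).symm
      _ ≤ a^2 + b^2 := self_le_add_right _ _

lemma schur_chain {μ : Measure (EuclideanSpace ℝ (Fin 3))} [IsFiniteMeasure μ]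
    {C Mtot : ℝ} (hC : 0 < C)
    (hgrowth : ∀ (x : EuclideanSpace ℝ (Fin 3)) (r : ℝ), 0 < r →
      μ (ball x r) ≤ ENNReal.ofReal (C * r ^ 2))
    (htot : μ Set.univ ≤ ENNReal.ofReal Mtot)
    {G : EuclideanSpace ℝ (Fin 3) → ℝ≥0∞} (hG : Measurable G) :
    ∫⁻ x, (∫⁻ y, kk (x - y) * G y ∂μ)^2 ∂volume
      ≤ 2 * (224 * V3) * (ENNReal.ofReal Mtot + ENNReal.ofReal (16*C))
          * ∫⁻ y, (G y)^2 ∂μ := by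
  set P : ℝ≥0∞ := 224 * V3 with hP
  set D : ℝ≥0∞ := ENNReal.ofReal Mtot + ENNReal.ofReal (16*C) with hD
  have hpot : ∀ y : EuclideanSpace ℝ (Fin 3),
      ∫⁻ z, (ENNReal.ofReal ‖y - z‖)⁻¹ ∂μ ≤ D := fun y =>
    potential_bound hC hgrowth htot y
  -- measurability helpers
  have hsub : ∀ y : EuclideanSpace ℝ (Fin 3),
      Measurable fun x : EuclideanSpace ℝ (Fin 3) => kk (x - y) := fun y =>
    measurable_kk.comp (measurable_id.sub measurable_const)
  have hK2 : Measurable fun p : EuclideanSpace ℝ (Fin 3) × EuclideanSpace ℝ (Fin 3) =>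
      kk (p.1 - p.2) := measurable_kk.comp (measurable_fst.sub measurable_snd)
  have hc : Measurable fun p : EuclideanSpace ℝ (Fin 3) × EuclideanSpace ℝ (Fin 3) =>
      (ENNReal.ofReal ‖p.1 - p.2‖)⁻¹ :=
    (((measurable_fst.sub measurable_snd).norm).ennreal_ofReal).inv
  -- Step 1: expand the square
  have hsq : ∀ x, (∫⁻ y, kk (x - y) * G y ∂μ)^2
      = ∫⁻ y, ∫⁻ z, (kk (x - y) * G y) * (kk (x - z) * G z) ∂μ ∂μ := by
    intro x
    have hf : Measurable fun y => kk (x - y) * G y :=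
      ((measurable_kk.comp (measurable_const.sub measurable_id))).mul hG
    rw [sq]
    rw [← lintegral_mul_const'' _ hf.aemeasurable]
    congr 1
    funext y
    rw [← lintegral_const_mul'' _ hf.aemeasurable]
  simp_rw [hsq]
  -- Step 2: swap x out
  have hswap1 : ∫⁻ x, ∫⁻ y, (∫⁻ z, (kk (x - y) * G y) * (kk (x - z) * G z) ∂μ) ∂μ ∂volume
      = ∫⁻ y, ∫⁻ x, (∫⁻ z, (kk (x - y) * G y) * (kk (x - z) * G z) ∂μ) ∂volume ∂μ := by
    apply lintegral_lintegral_swap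
    apply Measurable.aemeasurable
    apply Measurable.lintegral_prod_right'
      (f := fun (p : (EuclideanSpace ℝ (Fin 3) × EuclideanSpace ℝ (Fin 3))
        × EuclideanSpace ℝ (Fin 3)) =>
        (kk (p.1.1 - p.1.2) * G p.1.2) * (kk (p.1.1 - p.2) * G p.2))
    apply Measurable.mul
    · exact (measurable_kk.comp ((measurable_fst.comp measurable_fst).sub
        (measurable_snd.comp measurable_fst))).mul (hG.comp (measurable_snd.comp measurable_fst))
    · exact (measurable_kk.comp ((measurable_fst.comp measurable_fst).sub
        measurable_snd)).mul (hG.comp measurable_snd)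
  rw [hswap1]
  have hswap2 : ∀ y : EuclideanSpace ℝ (Fin 3),
      ∫⁻ x, (∫⁻ z, (kk (x - y) * G y) * (kk (x - z) * G z) ∂μ) ∂volume
      = ∫⁻ z, (∫⁻ x, (kk (x - y) * G y) * (kk (x - z) * G z) ∂volume) ∂μ := by
    intro y
    apply lintegral_lintegral_swap
    apply Measurable.aemeasurable
    apply Measurable.mul
    · exact ((measurable_kk.comp (measurable_fst.sub measurable_const)).mul
        measurable_const)
    · exact (measurable_kk.comp (measurable_fst.sub measurable_snd)).mul
        (hG.comp measurable_snd)
  simp_rw [hswap2]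
  -- Step 3: bound inner x-integral a.e.
  have hinner : ∀ y : EuclideanSpace ℝ (Fin 3),
      ∫⁻ z, (∫⁻ x, (kk (x - y) * G y) * (kk (x - z) * G z) ∂volume) ∂μ
      ≤ ∫⁻ z, ((G y)^2 + (G z)^2) * (P * (ENNReal.ofReal ‖y - z‖)⁻¹) ∂μ := by
    intro y
    apply lintegral_mono_ae
    have hae : ∀ᵐ z ∂μ, z ≠ y := by
      rw [Filter.eventually_iff, mem_ae_iff]
      have : {z : EuclideanSpace ℝ (Fin 3) | z ≠ y}ᶜ = {y} := by
        ext w; simp [not_not]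
      rw [this]
      exact mu_singleton_zero hC hgrowth y
    filter_upwards [hae] with z hz
    have heq : ∫⁻ x, (kk (x - y) * G y) * (kk (x - z) * G z) ∂volume
        = (G y * G z) * ∫⁻ x, kk (x - y) * kk (x - z) ∂volume := by
      rw [← lintegral_const_mul'' (f := fun x => kk (x - y) * kk (x - z)) _
        (((hsub y).mul (hsub z)).aemeasurable)]
      congr 1
      funext x
      ring
    rw [heq]
    have hW : ∫⁻ x, kk (x - y) * kk (x - z) ∂volume ≤ P * (ENNReal.ofReal ‖y - z‖)⁻¹ := by
      have hyz : y ≠ z := fun h => hz h.symm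
      refine (lintegral_kk_mul_kk hyz).trans_eq ?_
      congr 1
      rw [one_div, ENNReal.ofReal_inv_of_pos (norm_pos_iff.mpr (sub_ne_zero.mpr hyz))]
    calc (G y * G z) * ∫⁻ x, kk (x - y) * kk (x - z) ∂volume
        ≤ (G y * G z) * (P * (ENNReal.ofReal ‖y - z‖)⁻¹) := mul_le_mul_right hW _
      _ ≤ ((G y)^2 + (G z)^2) * (P * (ENNReal.ofReal ‖y - z‖)⁻¹) :=
          mul_le_mul_left (mul_le_sq_add_sq _ _) _
  -- Step 4: split and bound
  have hmc : ∀ y : EuclideanSpace ℝ (Fin 3),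
      Measurable fun z => P * (ENNReal.ofReal ‖y - z‖)⁻¹ := fun y =>
    ((((measurable_const.sub measurable_id).norm).ennreal_ofReal).inv).const_mul _
  have hsplit : ∀ y : EuclideanSpace ℝ (Fin 3),
      ∫⁻ z, ((G y)^2 + (G z)^2) * (P * (ENNReal.ofReal ‖y - z‖)⁻¹) ∂μ
      = (G y)^2 * ∫⁻ z, P * (ENNReal.ofReal ‖y - z‖)⁻¹ ∂μ
        + ∫⁻ z, (G z)^2 * (P * (ENNReal.ofReal ‖y - z‖)⁻¹) ∂μ := by
    intro y
    rw [← lintegral_const_mul'' _ (hmc y).aemeasurable]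
    rw [← lintegral_add_left' (((hmc y).const_mul _).aemeasurable)]
    congr 1
    funext z
    ring
  have hm1 : ∀ y : EuclideanSpace ℝ (Fin 3),
      Measurable fun z : EuclideanSpace ℝ (Fin 3) => (ENNReal.ofReal ‖y - z‖)⁻¹ := by
    intro y
    have hs : Measurable fun z : EuclideanSpace ℝ (Fin 3) => y - z :=
      measurable_const.sub measurable_id
    exact (hs.norm.ennreal_ofReal).inv
  have hpotP : ∀ y : EuclideanSpace ℝ (Fin 3),
      ∫⁻ z, P * (ENNReal.ofReal ‖y - z‖)⁻¹ ∂μ ≤ P * D := by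
    intro y
    rw [lintegral_const_mul'' P (hm1 y).aemeasurable]
    exact mul_le_mul_right (hpot y) P
  have hpotP' : ∀ z : EuclideanSpace ℝ (Fin 3),
      ∫⁻ y, P * (ENNReal.ofReal ‖y - z‖)⁻¹ ∂μ ≤ P * D := by
    intro z
    have heq : ∀ y : EuclideanSpace ℝ (Fin 3), ‖y - z‖ = ‖z - y‖ := fun y => norm_sub_rev y z
    simp_rw [heq]
    exact hpotP z
  calc ∫⁻ y, (∫⁻ z, (∫⁻ x, (kk (x - y) * G y) * (kk (x - z) * G z) ∂volume) ∂μ) ∂μ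
      ≤ ∫⁻ y, ((G y)^2 * (P * D)
          + ∫⁻ z, (G z)^2 * (P * (ENNReal.ofReal ‖y - z‖)⁻¹) ∂μ) ∂μ := by
        apply lintegral_mono
        intro y
        refine (hinner y).trans ?_
        rw [hsplit y]
        exact add_le_add_left (mul_le_mul_right (hpotP y) _) _
    _ = (∫⁻ y, (G y)^2 * (P * D) ∂μ)
        + ∫⁻ y, (∫⁻ z, (G z)^2 * (P * (ENNReal.ofReal ‖y - z‖)⁻¹) ∂μ) ∂μ := by
        apply lintegral_add_left'
        exact ((hG.pow_const 2).mul_const _).aemeasurable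
    _ ≤ (P * D * ∫⁻ y, (G y)^2 ∂μ) + (P * D * ∫⁻ y, (G y)^2 ∂μ) := by
        apply add_le_add
        · rw [lintegral_mul_const'' _ (hG.pow_const 2).aemeasurable]
          rw [mul_comm]
        · have hswap3 : ∫⁻ y, (∫⁻ z, (G z)^2 * (P * (ENNReal.ofReal ‖y - z‖)⁻¹) ∂μ) ∂μ
              = ∫⁻ z, (∫⁻ y, (G z)^2 * (P * (ENNReal.ofReal ‖y - z‖)⁻¹) ∂μ) ∂μ := by
            apply lintegral_lintegral_swap
            apply Measurable.aemeasurable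
            exact ((hG.comp measurable_snd).pow_const 2).mul (hc.const_mul P)
          rw [hswap3]
          calc ∫⁻ z, (∫⁻ y, (G z)^2 * (P * (ENNReal.ofReal ‖y - z‖)⁻¹) ∂μ) ∂μ
              = ∫⁻ z, (G z)^2 * ∫⁻ y, P * (ENNReal.ofReal ‖y - z‖)⁻¹ ∂μ ∂μ := by
                congr 1
                funext z
                rw [lintegral_const_mul'' _ ?_]
                have hs : Measurable fun y : EuclideanSpace ℝ (Fin 3) =>
                    P * (ENNReal.ofReal ‖y - z‖)⁻¹ :=
                  ((measurable_id.sub measurable_const).norm.ennreal_ofReal).inv.const_mul P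
                exact hs.aemeasurable
            _ ≤ ∫⁻ z, (G z)^2 * (P * D) ∂μ := by
                apply lintegral_mono
                intro z
                exact mul_le_mul_right (hpotP' z) _
            _ = P * D * ∫⁻ z, (G z)^2 ∂μ := by
                rw [lintegral_mul_const'' _ (hG.pow_const 2).aemeasurable, mul_comm]
    _ = 2 * (224 * V3) * (ENNReal.ofReal Mtot + ENNReal.ofReal (16*C)) * ∫⁻ y, (G y)^2 ∂μ := by
        rw [← hP, ← hD]
        ring

lemma measurable_phi_entry (m : ℝ) (i j : Fin 4) :
    Measurable fun u : EuclideanSpace ℝ (Fin 3) => phiFund m u i j := by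
  have hexpr : (fun u : EuclideanSpace ℝ (Fin 3) => phiFund m u i j) = fun u =>
      (((Real.exp (-(m * ‖u‖)) / (4 * Real.pi * ‖u‖) : ℝ) : ℂ)) *
        ((m:ℂ) * diracBeta i j + (((1 + m * ‖u‖) / ‖u‖^2 : ℝ) : ℂ) *
          (Complex.I * (∑ k : Fin 3, (u k : ℂ) * diracAlpha k i j))) := by
    funext u
    simp [phiFund, Matrix.smul_apply, Matrix.add_apply, smul_eq_mul, alphaDot, Matrix.sum_apply]
  rw [hexpr]
  have hm1 : Measurable fun u : EuclideanSpace ℝ (Fin 3) =>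
      Real.exp (-(m * ‖u‖)) / (4 * Real.pi * ‖u‖) :=
    (Real.measurable_exp.comp ((measurable_norm.const_mul m).neg)).div
      (measurable_norm.const_mul (4 * Real.pi))
  have hm2 : Measurable fun u : EuclideanSpace ℝ (Fin 3) => (1 + m * ‖u‖) / ‖u‖^2 :=
    (measurable_const.add (measurable_norm.const_mul m)).div (measurable_norm.pow_const 2)
  have hm3 : Measurable fun u : EuclideanSpace ℝ (Fin 3) =>
      ∑ k : Fin 3, ((u k : ℂ) * diracAlpha k i j) :=
    Finset.measurable_sum _ fun k _ =>
      (Complex.measurable_ofReal.comp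
        (EuclideanSpace.proj k : EuclideanSpace ℝ (Fin 3) →L[ℝ] ℝ).continuous.measurable).mul_const _
  exact (Complex.measurable_ofReal.comp hm1).mul
    ((measurable_const).add ((Complex.measurable_ofReal.comp hm2).mul (hm3.const_mul _)))

lemma measurable_phi_mulVec_joint (m : ℝ) {g : EuclideanSpace ℝ (Fin 3) → Fin 4 → ℂ}
    (hg : Measurable g) :
    Measurable fun p : EuclideanSpace ℝ (Fin 3) × EuclideanSpace ℝ (Fin 3) =>
      (phiFund m (p.1 - p.2)).mulVec (g p.2) := by
  apply measurable_pi_lambda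
  intro i
  have hexpr : (fun p : EuclideanSpace ℝ (Fin 3) × EuclideanSpace ℝ (Fin 3) =>
      (phiFund m (p.1 - p.2)).mulVec (g p.2) i)
      = fun p => ∑ j, phiFund m (p.1 - p.2) i j * g p.2 j := by
    funext p
    simp [Matrix.mulVec, dotProduct]
  rw [hexpr]
  apply Finset.measurable_sum
  intro j _
  exact ((measurable_phi_entry m i j).comp (measurable_fst.sub measurable_snd)).mul
    ((measurable_pi_apply j).comp (hg.comp measurable_snd))

lemma enorm_sq_norm (v : Fin 4 → ℂ) :
    (ENNReal.ofReal (‖v‖^2)) = ((‖v‖₊ : ℝ≥0∞))^2 := by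
  rw [ENNReal.ofReal_pow (norm_nonneg _), ofReal_norm_eq_coe_nnnorm]


end SLaux

/-- Let `m > 0` and let `μ` be a compactly supported Borel measure on `ℝ³` with two-dimensional
growth `μ(B(x,r)) ≤ C r²`.  Then there is `C' > 0` such that for every `g ∈ L²(μ; ℂ⁴)`, the
integral defining `Φg(x)` converges absolutely for Lebesgue-a.e. `x`, `Φg ∈ L²(ℝ³; ℂ⁴)`,
and `∫ |Φg|² dx ≤ C' ∫ |g|² dμ`. -/
theorem singleLayer_L2_bounded (m : ℝ) (hm : 0 < m)
    (μ : Measure (EuclideanSpace ℝ (Fin 3)))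
    (S : Set (EuclideanSpace ℝ (Fin 3))) (hSclosed : IsClosed S) (hScompact : IsCompact S)
    (hSfull : μ Sᶜ = 0)
    (C : ℝ) (hC : 0 < C)
    (hgrowth : ∀ (x : EuclideanSpace ℝ (Fin 3)) (r : ℝ), 0 < r →
      μ (Metric.ball x r) ≤ ENNReal.ofReal (C * r ^ 2)) :
    ∃ C' > 0, ∀ g : EuclideanSpace ℝ (Fin 3) → Fin 4 → ℂ, MemLp g 2 μ →
      (∀ᵐ x ∂(volume : Measure (EuclideanSpace ℝ (Fin 3))),
        Integrable (fun y => (phiFund m (x - y)).mulVec (g y)) μ) ∧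
      MemLp (singleLayer m μ g) 2 volume ∧
      ∫ x, ‖singleLayer m μ g x‖ ^ 2 ≤ C' * ∫ y, ‖g y‖ ^ 2 ∂μ :=  by
  classical
  obtain ⟨R, hSR⟩ := hScompact.isBounded.subset_ball 0
  set R1 := max R 1 with hR1
  have hR1pos : (0:ℝ) < R1 := lt_of_lt_of_le one_pos (le_max_right _ _)
  set Mtot := C * R1^2 with hMtot
  have hball : S ⊆ Metric.ball 0 R1 := hSR.trans (Metric.ball_subset_ball (le_max_left _ _))
  have htot : μ Set.univ ≤ ENNReal.ofReal Mtot := by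
    calc μ Set.univ = μ (S ∪ Sᶜ) := by rw [Set.union_compl_self]
      _ ≤ μ S + μ Sᶜ := measure_union_le _ _
      _ = μ S := by rw [hSfull, add_zero]
      _ ≤ μ (Metric.ball 0 R1) := measure_mono hball
      _ ≤ ENNReal.ofReal (C * R1^2) := hgrowth 0 _ hR1pos
  haveI : IsFiniteMeasure μ :=
    ⟨lt_of_le_of_lt htot ENNReal.ofReal_lt_top⟩
  set Cs : ℝ≥0∞ := 2 * (224 * V3) * (ENNReal.ofReal Mtot + ENNReal.ofReal (16*C)) with hCs
  set Ctot : ℝ≥0∞ := 256 * Cs with hCtot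
  have hCs_ne : Cs ≠ ⊤ := by
    rw [hCs]
    exact ENNReal.mul_ne_top
      (ENNReal.mul_ne_top (by norm_num)
        (ENNReal.mul_ne_top (by norm_num) V3_lt_top.ne))
      (ENNReal.add_ne_top.mpr ⟨ENNReal.ofReal_ne_top, ENNReal.ofReal_ne_top⟩)
  have hCtot_ne : Ctot ≠ ⊤ := by
    rw [hCtot]
    exact ENNReal.mul_ne_top (by norm_num) hCs_ne
  refine ⟨Ctot.toReal + 1, by positivity, ?_⟩
  intro g hg
  obtain ⟨g', hg'sm, hgg'⟩ := hg.1
  have hg'meas : Measurable g' := hg'sm.measurable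
  have hgmem' : MemLp g' 2 μ := hg.ae_eq hgg'
  set G : EuclideanSpace ℝ (Fin 3) → ℝ≥0∞ := fun y => ((‖g' y‖₊ : ℝ≥0∞)) with hGdef
  have hGmeas : Measurable G := hg'meas.nnnorm.coe_nnreal_ennreal
  have hpow2 : ∀ a : ℝ≥0∞, a ^ (2:ℝ) = a^2 := fun a => by
    rw [← ENNReal.rpow_natCast a 2]
    norm_num
  have hY : ∫⁻ y, (G y)^2 ∂μ < ⊤ := by
    have h1 := hgmem'.2
    rw [eLpNorm_eq_lintegral_rpow_enorm_toReal (by norm_num) (by norm_num)] at h1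
    have h2 : ((2:ℝ≥0∞)).toReal = 2 := by simp
    rw [h2] at h1
    have h3 := (ENNReal.rpow_lt_top_iff_of_pos (by norm_num : (0:ℝ) < 1/2)).mp h1
    simp_rw [hpow2] at h3
    exact h3
  set H : EuclideanSpace ℝ (Fin 3) → ℝ≥0∞ := fun x => ∫⁻ y, kk (x - y) * G y ∂μ with hHdef
  have hHmeas : Measurable H := by
    apply Measurable.lintegral_prod_right'
      (f := fun p : EuclideanSpace ℝ (Fin 3) × EuclideanSpace ℝ (Fin 3) =>
        kk (p.1 - p.2) * G p.2)
    exact (measurable_kk.comp (measurable_fst.sub measurable_snd)).mul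
      (hGmeas.comp measurable_snd)
  have hH2 : ∫⁻ x, (H x)^2 ∂volume ≤ Cs * ∫⁻ y, (G y)^2 ∂μ :=
    schur_chain hC hgrowth htot hGmeas
  have hH2fin : ∫⁻ x, (H x)^2 ∂volume < ⊤ :=
    lt_of_le_of_lt hH2 (ENNReal.mul_lt_top hCs_ne.lt_top hY)
  have hHae : ∀ᵐ x ∂(volume : Measure (EuclideanSpace ℝ (Fin 3))), H x < ⊤ := by
    filter_upwards [ae_lt_top (hHmeas.pow_const 2) hH2fin.ne] with x hx
    by_contra hcon
    rw [not_lt, top_le_iff] at hcon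
    rw [hcon] at hx
    rw [pow_two, ENNReal.top_mul_top] at hx
    exact lt_irrefl _ hx
  have hker : ∀ x : EuclideanSpace ℝ (Fin 3),
      ∫⁻ y, (‖(phiFund m (x - y)).mulVec (g' y)‖₊ : ℝ≥0∞) ∂μ ≤ 16 * H x := by
    intro x
    have hmeasi : Measurable fun y : EuclideanSpace ℝ (Fin 3) => kk (x - y) * G y :=
      (measurable_kk.comp (measurable_const.sub measurable_id)).mul hGmeas
    calc ∫⁻ y, (‖(phiFund m (x - y)).mulVec (g' y)‖₊ : ℝ≥0∞) ∂μ
        ≤ ∫⁻ y, 16 * (kk (x - y) * G y) ∂μ := by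
          apply lintegral_mono
          intro y
          refine le_trans (mulVec_enorm_le hm (x - y) (g' y)) (le_of_eq ?_)
          rw [hGdef, mul_assoc]
      _ = 16 * H x := lintegral_const_mul'' 16 hmeasi.aemeasurable
  have hjoint : Measurable fun p : EuclideanSpace ℝ (Fin 3) × EuclideanSpace ℝ (Fin 3) =>
      (phiFund m (p.1 - p.2)).mulVec (g' p.2) := measurable_phi_mulVec_joint m hg'meas
  have hint' : ∀ᵐ x ∂(volume : Measure (EuclideanSpace ℝ (Fin 3))),
      Integrable (fun y => (phiFund m (x - y)).mulVec (g' y)) μ := by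
    filter_upwards [hHae] with x hx
    constructor
    · exact ((hjoint.comp (measurable_const.prodMk measurable_id
        : Measurable fun y : EuclideanSpace ℝ (Fin 3) => (x, y)))).aestronglyMeasurable
    · rw [hasFiniteIntegral_def]
      exact lt_of_le_of_lt (hker x)
        (ENNReal.mul_lt_top (by norm_num : (16:ℝ≥0∞) ≠ ⊤).lt_top hx)
  have hint : ∀ᵐ x ∂(volume : Measure (EuclideanSpace ℝ (Fin 3))),
      Integrable (fun y => (phiFund m (x - y)).mulVec (g y)) μ := by
    filter_upwards [hint'] with x hx
    apply hx.congr
    filter_upwards [hgg'] with y hy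
    rw [hy]
  have hSL : singleLayer m μ g = singleLayer m μ g' := by
    funext x
    apply integral_congr_ae
    filter_upwards [hgg'] with y hy
    rw [hy]
  have hSLsm : StronglyMeasurable (singleLayer m μ g') := by
    apply StronglyMeasurable.integral_prod_right'
      (f := fun p : EuclideanSpace ℝ (Fin 3) × EuclideanSpace ℝ (Fin 3) =>
        (phiFund m (p.1 - p.2)).mulVec (g' p.2))
    exact hjoint.stronglyMeasurable
  have hSLbound : ∀ x, (‖singleLayer m μ g' x‖₊ : ℝ≥0∞) ≤ 16 * H x := fun x =>
    le_trans (enorm_integral_le_lintegral_enorm _) (hker x)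
  have hX : ∫⁻ x, ((‖singleLayer m μ g' x‖₊ : ℝ≥0∞))^2 ∂volume
      ≤ Ctot * ∫⁻ y, (G y)^2 ∂μ := by
    calc ∫⁻ x, ((‖singleLayer m μ g' x‖₊ : ℝ≥0∞))^2 ∂volume
        ≤ ∫⁻ x, (16 * H x)^2 ∂volume :=
          lintegral_mono fun x => pow_le_pow_left' (hSLbound x) 2
      _ = ∫⁻ x, 256 * (H x)^2 ∂volume := by
          congr 1
          funext x
          rw [mul_pow]
          norm_num
      _ = 256 * ∫⁻ x, (H x)^2 ∂volume :=
          lintegral_const_mul'' 256 ((hHmeas.pow_const 2)).aemeasurable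
      _ ≤ 256 * (Cs * ∫⁻ y, (G y)^2 ∂μ) := mul_le_mul_right hH2 _
      _ = Ctot * ∫⁻ y, (G y)^2 ∂μ := by rw [hCtot]; ring
  have hsq_sm : StronglyMeasurable fun x => ‖singleLayer m μ g' x‖^2 := by
    have : StronglyMeasurable fun x => ‖singleLayer m μ g' x‖ * ‖singleLayer m μ g' x‖ :=
      hSLsm.norm.mul hSLsm.norm
    simpa [pow_two] using this
  have hXfin : ∫⁻ x, ((‖singleLayer m μ g' x‖₊ : ℝ≥0∞))^2 ∂volume < ⊤ :=
    lt_of_le_of_lt hX (ENNReal.mul_lt_top hCtot_ne.lt_top hY)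
  have hmem2 : MemLp (singleLayer m μ g') 2 volume := by
    rw [memLp_two_iff_integrable_sq_norm hSLsm.aestronglyMeasurable]
    constructor
    · exact hsq_sm.aestronglyMeasurable
    · rw [hasFiniteIntegral_def]
      have heq : ∀ x, ((‖(‖singleLayer m μ g' x‖^2 : ℝ)‖₊ : ℝ≥0∞))
          = ((‖singleLayer m μ g' x‖₊ : ℝ≥0∞))^2 := by
        intro x
        rw [← ofReal_norm_eq_coe_nnnorm, Real.norm_eq_abs, abs_of_nonneg (by positivity),
          enorm_sq_norm]
      simp_rw [enorm_eq_nnnorm, heq]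
      exact hXfin
  refine ⟨hint, by rw [hSL]; exact hmem2, ?_⟩
  rw [hSL]
  have hLHS : ∫ x, ‖singleLayer m μ g' x‖^2
      = (∫⁻ x, ((‖singleLayer m μ g' x‖₊ : ℝ≥0∞))^2 ∂volume).toReal := by
    rw [integral_eq_lintegral_of_nonneg_ae
      (Filter.Eventually.of_forall fun x => by positivity) hsq_sm.aestronglyMeasurable]
    congr 1
    apply lintegral_congr
    intro x
    exact enorm_sq_norm _
  have hRHSae : (fun y => ‖g y‖^2) =ᵐ[μ] fun y => ‖g' y‖^2 := by
    filter_upwards [hgg'] with y hy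
    rw [hy]
  have hg'sq_sm : StronglyMeasurable fun y => ‖g' y‖^2 := by
    have : StronglyMeasurable fun y => ‖g' y‖ * ‖g' y‖ := hg'sm.norm.mul hg'sm.norm
    simpa [pow_two] using this
  have hRHS : ∫ y, ‖g y‖^2 ∂μ = (∫⁻ y, (G y)^2 ∂μ).toReal := by
    rw [integral_congr_ae hRHSae]
    rw [integral_eq_lintegral_of_nonneg_ae
      (Filter.Eventually.of_forall fun y => by positivity) hg'sq_sm.aestronglyMeasurable]
    congr 1
    apply lintegral_congr
    intro y
    rw [enorm_sq_norm]
  rw [hLHS, hRHS]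
  calc (∫⁻ x, ((‖singleLayer m μ g' x‖₊ : ℝ≥0∞))^2 ∂volume).toReal
      ≤ (Ctot * ∫⁻ y, (G y)^2 ∂μ).toReal :=
        ENNReal.toReal_mono (ENNReal.mul_ne_top hCtot_ne hY.ne) hX
    _ = Ctot.toReal * (∫⁻ y, (G y)^2 ∂μ).toReal := ENNReal.toReal_mul
    _ ≤ (Ctot.toReal + 1) * (∫⁻ y, (G y)^2 ∂μ).toReal := by
        have h0 : (0:ℝ) ≤ (∫⁻ y, (G y)^2 ∂μ).toReal := ENNReal.toReal_nonneg
        nlinarith
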